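/- Let (K, v) be a separably closed valued field of characteristic p > 0 with value group Γ = v(K^×). Then for every a ∈ K with a ≠ 0 and every δ ∈ Γ with v(a) ≤ δ, there exists b ∈ K such that v(a − b^p) = δ. -/

import Mathlib

/-- A valuation on a field `K` with values in the linearly ordered abelian group `Γ`
(together with `∞ = ⊤`), surjective onto `Γ`, i.e. `Γ = v(K^×)`. -/
structure ValuedFieldAux (K : Type*) [Field K] (Γ : Type*)
    [AddCommGroup Γ] [LinearOrder Γ] [IsOrderedAddMonoid Γ] where
  v : K → WithTop Γ
  v_eq_top_iff : ∀ x : K, v x = ⊤ ↔ x = 0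
  v_mul : ∀ x y : K, v (x * y) = v x + v y
  v_add : ∀ x y : K, min (v x) (v y) ≤ v (x + y)
  v_surj : ∀ γ : Γ, ∃ x : K, v x = (γ : WithTop Γ)

namespace ValuedFieldAux

variable {K : Type*} [Field K] {Γ : Type*} [AddCommGroup Γ] [LinearOrder Γ] [IsOrderedAddMonoid Γ]
  (vf : ValuedFieldAux K Γ)

lemma v_ne_top {x : K} (hx : x ≠ 0) : vf.v x ≠ ⊤ :=
  fun h => hx ((vf.v_eq_top_iff x).1 h)

lemma exists_coe {x : K} (hx : x ≠ 0) : ∃ γ : Γ, vf.v x = (γ : WithTop Γ) := by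
  rcases WithTop.ne_top_iff_exists.1 (vf.v_ne_top hx) with ⟨γ, hγ⟩
  exact ⟨γ, hγ.symm⟩

lemma v_one : vf.v 1 = 0 := by
  obtain ⟨γ, hγ⟩ := vf.exists_coe (one_ne_zero (α := K))
  have h := vf.v_mul 1 1
  rw [one_mul, hγ] at h
  have h2 : γ = γ + γ := by exact_mod_cast h
  have h3 : (0 : Γ) = γ := add_left_cancel (a := γ) (by rw [add_zero]; exact h2)
  rw [hγ, ← h3, WithTop.coe_zero]

lemma v_neg (x : K) : vf.v (-x) = vf.v x := by
  have hm1 : vf.v (-1 : K) = 0 := by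
    obtain ⟨γ, hγ⟩ := vf.exists_coe (neg_ne_zero.2 (one_ne_zero (α := K)))
    have h := vf.v_mul (-1) (-1)
    rw [neg_mul_neg, one_mul, vf.v_one, hγ] at h
    have h2 : γ + γ = 0 := by exact_mod_cast h.symm
    have h3 : γ = 0 := by
      rcases lt_trichotomy γ 0 with hγ0 | hγ0 | hγ0
      · exact absurd h2 (ne_of_lt (add_neg hγ0 hγ0))
      · exact hγ0
      · exact absurd h2 (ne_of_gt (add_pos hγ0 hγ0))
    rw [hγ, h3, WithTop.coe_zero]
  calc vf.v (-x) = vf.v ((-1) * x) := by rw [neg_one_mul]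
    _ = vf.v (-1 : K) + vf.v x := vf.v_mul _ _
    _ = vf.v x := by rw [hm1, zero_add]

lemma v_add_eq_min {x y : K} (h : vf.v x ≠ vf.v y) :
    vf.v (x + y) = min (vf.v x) (vf.v y) := by
  wlog hxy : vf.v x < vf.v y generalizing x y
  · rw [add_comm, min_comm]
    exact this h.symm (lt_of_le_of_ne (not_lt.1 hxy) h.symm)
  rw [min_eq_left hxy.le]
  refine le_antisymm ?_ (le_trans (by rw [min_eq_left hxy.le]) (vf.v_add x y))
  by_contra hcon
  push_neg at hcon
  have key : min (vf.v (x + y)) (vf.v y) ≤ vf.v x := by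
    have h2 := vf.v_add (x + y) (-y)
    rw [add_neg_cancel_right, vf.v_neg] at h2
    exact h2
  exact absurd key (not_le.2 (lt_min hcon hxy))

lemma v_pow {x : K} {γ : Γ} (h : vf.v x = (γ : WithTop Γ)) (n : ℕ) :
    vf.v (x ^ n) = ((n • γ : Γ) : WithTop Γ) := by
  induction n with
  | zero => simpa using vf.v_one
  | succ n ih =>
    rw [pow_succ, vf.v_mul, ih, h, succ_nsmul, WithTop.coe_add]

end ValuedFieldAux

/-- Let `(K, v)` be a separably closed valued field of characteristic
`p > 0` with value group `Γ`. Then for every `a ≠ 0` and every `δ ∈ Γ` with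
`v a ≤ δ`, there exists `b ∈ K` with `v (a − b^p) = δ`. -/
theorem stmt_7 (p : ℕ) (hp : p.Prime) (K : Type*) [Field K] [CharP K p] [IsSepClosed K]
    (Γ : Type*) [AddCommGroup Γ] [LinearOrder Γ] [IsOrderedAddMonoid Γ] (vf : ValuedFieldAux K Γ)
    (a : K) (ha : a ≠ 0) (δ : Γ) (hδ : vf.v a ≤ (δ : WithTop Γ)) :
    ∃ b : K, vf.v (a - b ^ p) = (δ : WithTop Γ) := by
  classical
  rcases eq_or_lt_of_le hδ with heq | hlt
  · exact ⟨0, by rw [zero_pow hp.ne_zero, sub_zero, heq]⟩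
  -- Now `v a < δ`.
  obtain ⟨α, hα⟩ := vf.exists_coe ha
  have hαδ : α < δ := by rwa [hα, WithTop.coe_lt_coe] at hlt
  -- choose `μ` with `0 < μ`, `0 < p • μ + α`
  set μ : Γ := max (-α) 0 + (δ - α) with hμdef
  have hμpos : 0 < μ :=
    add_pos_of_nonneg_of_pos (le_max_right _ _) (sub_pos.2 hαδ)
  have hμα : 0 < μ + α := by
    have e : μ + α = max (-α) 0 + δ := by rw [hμdef]; abel
    have h1 : -α + δ ≤ max (-α) 0 + δ := add_le_add_left (le_max_left _ _) δ
    have h2 : (0 : Γ) < -α + δ := by rwa [neg_add_eq_sub, sub_pos]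
    rw [e]; exact lt_of_lt_of_le h2 h1
  have hpμ : μ ≤ p • μ := by
    have hps : p = (p - 1) + 1 := (Nat.succ_pred_eq_of_pos hp.pos).symm
    calc μ = 0 + μ := (zero_add μ).symm
      _ ≤ (p - 1) • μ + μ := add_le_add_left (nsmul_nonneg hμpos.le _) μ
      _ = p • μ := by rw [← succ_nsmul, ← hps]
  have hpμα : 0 < p • μ + α := lt_of_lt_of_le hμα (by
    rw [add_comm μ α, add_comm (p • μ) α]; exact add_le_add_right hpμ α)
  have hδpμ : 0 < δ + p • μ := by
    have : p • μ + α < p • μ + δ := add_lt_add_right hαδ _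
    rw [add_comm]; exact lt_trans hpμα this
  -- pick elements of valuation `δ` and `μ`
  obtain ⟨c, hc⟩ := vf.v_surj δ
  have hc0 : c ≠ 0 := by
    intro h
    rw [(vf.v_eq_top_iff c).2 h] at hc
    exact WithTop.coe_ne_top hc.symm
  obtain ⟨m, hm⟩ := vf.v_surj μ
  have hm0 : m ≠ 0 := by
    intro h
    rw [(vf.v_eq_top_iff m).2 h] at hm
    exact WithTop.coe_ne_top hm.symm
  -- the element a - c has valuation α
  have ha'0 : vf.v a ≠ vf.v (-c) := by
    rw [hα, vf.v_neg, hc]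
    exact fun h => (ne_of_lt hαδ) (WithTop.coe_inj.1 h)
  have hva' : vf.v (a - c) = (α : WithTop Γ) := by
    rw [sub_eq_add_neg, vf.v_add_eq_min ha'0, hα, vf.v_neg, hc]
    exact min_eq_left (WithTop.coe_le_coe.2 hαδ.le)
  have ha' : a - c ≠ 0 := fun h =>
    WithTop.coe_ne_top (hva'.symm.trans ((vf.v_eq_top_iff _).2 h))
  -- find a root b of X^p + (c*m) X - (a - c)
  obtain ⟨b, hb⟩ := IsSepClosed.exists_root_C_mul_X_pow_add_C_mul_X_add_C' p p
    (1 : K) (c * m) (-(a - c)) dvd_rfl hp.two_le (mul_ne_zero hc0 hm0)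
  have hbp : b ^ p = (a - c) - c * m * b := by linear_combination hb
  have hb0 : b ≠ 0 := by
    intro h
    rw [h, zero_pow hp.ne_zero, mul_zero, sub_zero] at hbp
    exact ha' hbp.symm
  obtain ⟨β, hβ⟩ := vf.exists_coe hb0
  have hvb : vf.v (b ^ p) = ((p • β : Γ) : WithTop Γ) := vf.v_pow hβ p
  have hvcmb : vf.v (c * m * b) = ((δ + μ + β : Γ) : WithTop Γ) := by
    rw [vf.v_mul, vf.v_mul, hc, hm, hβ, ← WithTop.coe_add, ← WithTop.coe_add]
  have hmin : min ((α : WithTop Γ)) ((δ + μ + β : Γ) : WithTop Γ)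
      ≤ ((p • β : Γ) : WithTop Γ) := by
    have h2 := vf.v_add (a - c) (-(c * m * b))
    have h3 : (a - c) + -(c * m * b) = b ^ p := by rw [hbp]; ring
    rw [h3, hva', vf.v_neg, hvcmb, hvb] at h2
    exact h2
  -- the key inequality : 0 < μ + β
  have hkey : 0 < μ + β := by
    rcases le_total α (δ + μ + β) with hcase | hcase
    · have h3 : α ≤ p • β := by
        have := hmin
        rw [min_eq_left (WithTop.coe_le_coe.2 hcase)] at this
        exact_mod_cast this
      have h4 : 0 < p • μ + p • β := lt_of_lt_of_le hpμα (add_le_add_right h3 _)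
      by_contra hcon
      push_neg at hcon
      have h5 : p • (μ + β) ≤ 0 := nsmul_nonpos hcon p
      rw [nsmul_add] at h5
      exact absurd h4 (not_lt.2 h5)
    · have h3 : δ + μ + β ≤ p • β := by
        have := hmin
        rw [min_eq_right (WithTop.coe_le_coe.2 hcase)] at this
        exact_mod_cast this
      have hps : p = (p - 1) + 1 := (Nat.succ_pred_eq_of_pos hp.pos).symm
      have h4 : δ + μ ≤ (p - 1) • β := by
        have : p • β = (p - 1) • β + β := by rw [← succ_nsmul, ← hps]
        rw [this] at h3
        exact (add_le_add_iff_right β).1 h3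
      by_contra hcon
      push_neg at hcon
      have h5 : (p - 1) • (μ + β) ≤ 0 := nsmul_nonpos hcon (p - 1)
      rw [nsmul_add] at h5
      have h6 : δ + μ + (p - 1) • μ ≤ (p - 1) • β + (p - 1) • μ :=
        add_le_add_left h4 _
      have h7 : (p - 1) • β + (p - 1) • μ = (p - 1) • μ + (p - 1) • β := add_comm _ _
      have h8 : δ + μ + (p - 1) • μ ≤ 0 := le_trans h6 (h7 ▸ h5)
      have h9 : δ + μ + (p - 1) • μ = δ + p • μ := by
        have : p • μ = (p - 1) • μ + μ := by rw [← succ_nsmul, ← hps]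
        rw [this]; abel
      rw [h9] at h8
      exact absurd hδpμ (not_lt.2 h8)
  -- conclude
  refine ⟨b, ?_⟩
  have habp : a - b ^ p = c * (1 + m * b) := by rw [hbp]; ring
  have hvmb : vf.v (m * b) = ((μ + β : Γ) : WithTop Γ) := by
    rw [vf.v_mul, hm, hβ, ← WithTop.coe_add]
  have hne1 : vf.v (1 : K) ≠ vf.v (m * b) := by
    rw [vf.v_one, hvmb, ← WithTop.coe_zero]
    exact fun h => (ne_of_lt hkey) (WithTop.coe_inj.1 h)
  rw [habp, vf.v_mul, hc, vf.v_add_eq_min hne1, vf.v_one, hvmb, ← WithTop.coe_zero,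
    min_eq_left (WithTop.coe_le_coe.2 hkey.le), WithTop.coe_zero, add_zero]
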